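/- Let K be a field, let A : ℤ → K satisfy A h ≠ 0 for all h, and suppose there are λ, μ ∈ K such that A(h−2)·A(h+2) = λ·A(h−1)·A(h+1) + μ·A(h)² for all h ∈ ℤ (i.e., A is a Somos 4 sequence). Then for every integer m ≥ 2 there exist constants a, b ∈ K such that A(h−m)·A(h+m+1) = a·A(h−1)·A(h+2) + b·A(h)·A(h+1) for all h ∈ ℤ; that is, A is a three-term Somos 2m+1 sequence for every m ≥ 2. -/

import Mathlib

/-- A function whose "discrete logarithmic derivative ratio" is shift-invariant is
proportional to `g`. -/
private lemma somos_ratio_const {K : Type*} [Field K] (f g : ℤ → K) (hg : ∀ h, g h ≠ 0)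
    (hstep : ∀ h, f (h + 1) * g h = f h * g (h + 1)) : ∀ h, f h * g 0 = f 0 * g h := by
  intro h
  induction h using Int.induction_on with
  | zero => ring
  | succ k ih =>
    have h2 := hstep k
    have key : f ((k : ℤ) + 1) * g 0 * g k = f 0 * g ((k : ℤ) + 1) * g k := by
      calc f ((k : ℤ) + 1) * g 0 * g k = f ((k : ℤ) + 1) * g k * g 0 := by ring
        _ = f k * g ((k : ℤ) + 1) * g 0 := by rw [h2]
        _ = (f k * g 0) * g ((k : ℤ) + 1) := by ring
        _ = (f 0 * g k) * g ((k : ℤ) + 1) := by rw [ih]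
        _ = f 0 * g ((k : ℤ) + 1) * g k := by ring
    exact mul_right_cancel₀ (hg k) key
  | pred k ih =>
    have h2 := hstep (-(k : ℤ) - 1)
    rw [show (-(k : ℤ) - 1) + 1 = -(k : ℤ) by ring] at h2
    have key : f (-(k : ℤ) - 1) * g 0 * g (-(k : ℤ)) = f 0 * g (-(k : ℤ) - 1) * g (-(k : ℤ)) := by
      calc f (-(k : ℤ) - 1) * g 0 * g (-(k : ℤ))
          = (f (-(k : ℤ) - 1) * g (-(k : ℤ))) * g 0 := by ring
        _ = (f (-(k : ℤ)) * g (-(k : ℤ) - 1)) * g 0 := by rw [← h2]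
        _ = (f (-(k : ℤ)) * g 0) * g (-(k : ℤ) - 1) := by ring
        _ = (f 0 * g (-(k : ℤ))) * g (-(k : ℤ) - 1) := by rw [ih]
        _ = f 0 * g (-(k : ℤ) - 1) * g (-(k : ℤ)) := by ring
    exact mul_right_cancel₀ (hg (-(k : ℤ))) key

/-- The inductive step: from two-term representations of consecutive "diagonal" products,
obtain one for the next diagonal, together with the conic consistency condition. -/
private lemma somos_step {K : Type*} [Field K] (t u Bp B Bn : ℤ → K)
    (hu : ∀ h, u h ≠ 0) (hBp : ∀ h, Bp h ≠ 0)
    (mu be d2 : K)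
    (I1 : ∀ h, t (h - 1) * t (h + 1) = -mu * (t h * u h) + be * (u h) ^ 2)
    (I2 : ∀ h, t (h - 1) * u (h + 1) + u (h - 1) * t (h + 1)
        = -(t h) ^ 2 + d2 * (t h * u h) + mu * (u h) ^ 2)
    (I0 : ∀ h, u (h - 1) * u (h + 1) = t h * u h)
    (hprod : ∀ h, Bn h * Bp h = B (h - 1) * B (h + 1))
    (a' b' a b : K)
    (hp : ∀ h, Bp h = a' * t h + b' * u h)
    (hq : ∀ h, B h = a * t h + b * u h)
    (hphi : -(a * b) * b' ^ 2 - (b ^ 2 + a * b * d2 - a ^ 2 * mu) * (a' * b')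
        + (a ^ 2 * be + a * b * mu) * a' ^ 2 = 0) :
    ∃ c d : K, (∀ h, Bn h = c * t h + d * u h) ∧
      -(c * d) * b ^ 2 - (d ^ 2 + c * d * d2 - c ^ 2 * mu) * (a * b)
        + (c ^ 2 * be + c * d * mu) * a ^ 2 = 0 := by
  obtain ⟨c, d, E1, E2, E3⟩ : ∃ c d : K, c * a' = -(a * b) ∧
      c * b' + d * a' = b ^ 2 + a * b * d2 - a ^ 2 * mu ∧
      d * b' = a ^ 2 * be + a * b * mu := by
    by_cases ha' : a' = 0
    · have hb' : b' ≠ 0 := by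
        intro hb0
        apply hBp 0
        rw [hp 0, ha', hb0]; ring
      have hM1 : -(a * b) = 0 := by
        have h2 : -(a * b) * b' ^ 2 = 0 := by
          linear_combination hphi + ((b ^ 2 + a * b * d2 - a ^ 2 * mu) * b'
            - (a ^ 2 * be + a * b * mu) * a') * ha'
        rcases mul_eq_zero.mp h2 with h | h
        · exact h
        · exact absurd (pow_eq_zero_iff (two_ne_zero) |>.mp h) hb'
      refine ⟨(b ^ 2 + a * b * d2 - a ^ 2 * mu) / b', (a ^ 2 * be + a * b * mu) / b', ?_, ?_, ?_⟩
      · rw [ha', hM1]; ring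
      · rw [ha']; field_simp; ring
      · field_simp
    · by_cases hb' : b' = 0
      · have hM3 : a ^ 2 * be + a * b * mu = 0 := by
          have h2 : (a ^ 2 * be + a * b * mu) * a' ^ 2 = 0 := by
            linear_combination hphi + ((b ^ 2 + a * b * d2 - a ^ 2 * mu) * a'
              - (-(a * b)) * b') * hb'
          rcases mul_eq_zero.mp h2 with h | h
          · exact h
          · exact absurd (pow_eq_zero_iff (two_ne_zero) |>.mp h) ha'
        refine ⟨-(a * b) / a', (b ^ 2 + a * b * d2 - a ^ 2 * mu) / a', ?_, ?_, ?_⟩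
        · field_simp
        · rw [hb']; field_simp; ring
        · rw [hb', hM3]; ring
      · refine ⟨-(a * b) / a', (a ^ 2 * be + a * b * mu) / b', ?_, ?_, ?_⟩
        · field_simp
        · field_simp
          linear_combination hphi
        · field_simp
  have hrep : ∀ h, Bn h = c * t h + d * u h := by
    intro h
    have hfac : Bn h * Bp h = (c * t h + d * u h) * Bp h := by
      rw [hprod h, hq (h - 1), hq (h + 1), hp h]
      linear_combination a ^ 2 * I1 h + (a * b) * I2 h + b ^ 2 * I0 h
        - (t h) ^ 2 * E1 - (t h * u h) * E2 - (u h) ^ 2 * E3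
    exact mul_right_cancel₀ (hBp h) hfac
  refine ⟨c, d, hrep, ?_⟩
  linear_combination (c * d) * E2 - (c ^ 2) * E3 - (d ^ 2) * E1

theorem somos4_is_somos_odd {K : Type*} [Field K] (A : ℤ → K)
    (hA : ∀ h : ℤ, A h ≠ 0) (lam mu : K)
    (hrec : ∀ h : ℤ, A (h - 2) * A (h + 2) = lam * (A (h - 1) * A (h + 1)) + mu * (A h) ^ 2) :
    ∀ m : ℤ, 2 ≤ m → ∃ a b : K,
      ∀ h : ℤ, A (h - m) * A (h + m + 1) =
        a * (A (h - 1) * A (h + 2)) + b * (A h * A (h + 1)) := by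
  -- notation
  have hu : ∀ h : ℤ, A h * A (h + 1) ≠ 0 := fun h => mul_ne_zero (hA h) (hA (h + 1))
  have htu : ∀ h : ℤ, (A (h - 1) * A (h + 2)) * (A h * A (h + 1)) ≠ 0 :=
    fun h => mul_ne_zero (mul_ne_zero (hA _) (hA _)) (hu h)
  -- Somos 5 relation with α = -μ: A(h-2)A(h+3) + μ A(h-1)A(h+2) = β A(h)A(h+1)
  have inv5 : ∀ h : ℤ,
      (A (h - 1) * A (h + 4) + mu * (A h * A (h + 3))) * (A h * A (h + 1))
      = (A (h - 2) * A (h + 3) + mu * (A (h - 1) * A (h + 2))) * (A (h + 1) * A (h + 2)) := by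
    intro h
    have H0 := hrec h
    have H2 := hrec (h + 2)
    rw [show h + 2 - 2 = h by ring, show h + 2 + 2 = h + 4 by ring,
      show h + 2 - 1 = h + 1 by ring, show h + 2 + 1 = h + 3 by ring] at H2
    linear_combination (A (h - 1) * A (h + 1)) * H2 - (A (h + 1) * A (h + 3)) * H0
  have hconst5 := somos_ratio_const
      (fun h => A (h - 2) * A (h + 3) + mu * (A (h - 1) * A (h + 2)))
      (fun h => A h * A (h + 1)) hu
      (by
        intro h
        show (A (h + 1 - 2) * A (h + 1 + 3) + mu * (A (h + 1 - 1) * A (h + 1 + 2)))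
            * (A h * A (h + 1))
          = (A (h - 2) * A (h + 3) + mu * (A (h - 1) * A (h + 2))) * (A (h + 1) * A (h + 1 + 1))
        rw [show h + 1 - 2 = h - 1 by ring, show h + 1 + 3 = h + 4 by ring,
          show h + 1 - 1 = h by ring, show h + 1 + 2 = h + 3 by ring,
          show h + 1 + 1 = h + 2 by ring]
        exact inv5 h)
  have h01 : A 0 * A 1 ≠ 0 := mul_ne_zero (hA 0) (hA 1)
  have htu0 : (A (-1) * A 2) * (A 0 * A 1) ≠ 0 :=
    mul_ne_zero (mul_ne_zero (hA _) (hA _)) h01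
  set be : K := (A (-2) * A 3 + mu * (A (-1) * A 2)) / (A 0 * A 1) with hbe
  have h5 : ∀ h : ℤ, A (h - 2) * A (h + 3) + mu * (A (h - 1) * A (h + 2))
      = be * (A h * A (h + 1)) := by
    intro h
    have hx := hconst5 h
    norm_num at hx
    rw [hbe, div_mul_eq_mul_div, eq_div_iff h01]
    linear_combination hx
  -- the symmetric cross identity: N(h) = d2 * t(h) u(h)
  have invN : ∀ h : ℤ,
      (A (h - 1) * A (h + 2) * (A (h + 2) * A (h + 3)) + A h * A (h + 1) * (A (h + 1) * A (h + 4))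
        + (A h * A (h + 3)) ^ 2 - mu * (A (h + 1) * A (h + 2)) ^ 2)
        * ((A (h - 1) * A (h + 2)) * (A h * A (h + 1)))
      = (A (h - 2) * A (h + 1) * (A (h + 1) * A (h + 2)) + A (h - 1) * A h * (A h * A (h + 3))
        + (A (h - 1) * A (h + 2)) ^ 2 - mu * (A h * A (h + 1)) ^ 2)
        * ((A h * A (h + 3)) * (A (h + 1) * A (h + 2))) := by
    intro h
    have H0 := hrec h
    have H2 := hrec (h + 2)
    rw [show h + 2 - 2 = h by ring, show h + 2 + 2 = h + 4 by ring,
      show h + 2 - 1 = h + 1 by ring, show h + 2 + 1 = h + 3 by ring] at H2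
    linear_combination (A (h - 1) * A h * A (h + 1) ^ 3 * A (h + 2)) * H2
      - (A h * A (h + 1) ^ 3 * A (h + 2) * A (h + 3)) * H0
  have hconstN := somos_ratio_const
      (fun h => A (h - 2) * A (h + 1) * (A (h + 1) * A (h + 2)) + A (h - 1) * A h * (A h * A (h + 3))
        + (A (h - 1) * A (h + 2)) ^ 2 - mu * (A h * A (h + 1)) ^ 2)
      (fun h => (A (h - 1) * A (h + 2)) * (A h * A (h + 1))) htu
      (by
        intro h
        show (A (h + 1 - 2) * A (h + 1 + 1) * (A (h + 1 + 1) * A (h + 1 + 2))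
            + A (h + 1 - 1) * A (h + 1) * (A (h + 1) * A (h + 1 + 3))
            + (A (h + 1 - 1) * A (h + 1 + 2)) ^ 2 - mu * (A (h + 1) * A (h + 1 + 1)) ^ 2)
            * ((A (h - 1) * A (h + 2)) * (A h * A (h + 1)))
          = (A (h - 2) * A (h + 1) * (A (h + 1) * A (h + 2)) + A (h - 1) * A h * (A h * A (h + 3))
            + (A (h - 1) * A (h + 2)) ^ 2 - mu * (A h * A (h + 1)) ^ 2)
            * ((A (h + 1 - 1) * A (h + 1 + 2)) * (A (h + 1) * A (h + 1 + 1)))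
        rw [show h + 1 - 2 = h - 1 by ring, show h + 1 + 1 = h + 2 by ring,
          show h + 1 + 2 = h + 3 by ring, show h + 1 - 1 = h by ring,
          show h + 1 + 3 = h + 4 by ring]
        exact invN h)
  set d2 : K := (A (-2) * A 1 * (A 1 * A 2) + A (-1) * A 0 * (A 0 * A 3) + (A (-1) * A 2) ^ 2
      - mu * (A 0 * A 1) ^ 2) / ((A (-1) * A 2) * (A 0 * A 1)) with hd2
  have hN : ∀ h : ℤ, A (h - 2) * A (h + 1) * (A (h + 1) * A (h + 2))
      + A (h - 1) * A h * (A h * A (h + 3)) + (A (h - 1) * A (h + 2)) ^ 2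
      - mu * (A h * A (h + 1)) ^ 2
      = d2 * ((A (h - 1) * A (h + 2)) * (A h * A (h + 1))) := by
    intro h
    have hx := hconstN h
    norm_num at hx
    rw [hd2, div_mul_eq_mul_div, eq_div_iff htu0]
    linear_combination hx
  -- the key induction over ℕ
  have key : ∀ n : ℕ, ∃ a' b' a b : K,
      (∀ h : ℤ, A (h - (n : ℤ)) * A (h + (n : ℤ) + 1)
        = a' * (A (h - 1) * A (h + 2)) + b' * (A h * A (h + 1))) ∧
      (∀ h : ℤ, A (h - ((n : ℤ) + 1)) * A (h + ((n : ℤ) + 1) + 1)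
        = a * (A (h - 1) * A (h + 2)) + b * (A h * A (h + 1))) ∧
      -(a * b) * b' ^ 2 - (b ^ 2 + a * b * d2 - a ^ 2 * mu) * (a' * b')
        + (a ^ 2 * be + a * b * mu) * a' ^ 2 = 0 := by
    intro n
    induction n with
    | zero =>
      refine ⟨0, 1, 1, 0, ?_, ?_, by ring⟩
      · intro h
        rw [show h - ((0 : ℕ) : ℤ) = h by norm_num, show h + ((0 : ℕ) : ℤ) + 1 = h + 1 by norm_num]
        ring
      · intro h
        rw [show (((0 : ℕ) : ℤ) + 1) = 1 by norm_num]
        rw [show h + 1 + 1 = h + 2 by ring]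
        ring
    | succ n ih =>
      obtain ⟨a', b', a, b, hp, hq, hphi⟩ := ih
      have hstep := somos_step (fun h => A (h - 1) * A (h + 2)) (fun h => A h * A (h + 1))
        (fun h => A (h - (n : ℤ)) * A (h + (n : ℤ) + 1))
        (fun h => A (h - ((n : ℤ) + 1)) * A (h + ((n : ℤ) + 1) + 1))
        (fun h => A (h - ((n : ℤ) + 2)) * A (h + ((n : ℤ) + 2) + 1))
        hu (fun h => mul_ne_zero (hA _) (hA _)) mu be d2
        (by
          intro h
          show A (h - 1 - 1) * A (h - 1 + 2) * (A (h + 1 - 1) * A (h + 1 + 2))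
            = -mu * ((A (h - 1) * A (h + 2)) * (A h * A (h + 1)))
              + be * (A h * A (h + 1)) ^ 2
          rw [show h - 1 - 1 = h - 2 by ring, show h - 1 + 2 = h + 1 by ring,
            show h + 1 - 1 = h by ring, show h + 1 + 2 = h + 3 by ring]
          linear_combination (A h * A (h + 1)) * h5 h)
        (by
          intro h
          show A (h - 1 - 1) * A (h - 1 + 2) * (A (h + 1) * A (h + 1 + 1))
              + A (h - 1) * A (h - 1 + 1) * (A (h + 1 - 1) * A (h + 1 + 2))
            = -(A (h - 1) * A (h + 2)) ^ 2 + d2 * ((A (h - 1) * A (h + 2)) * (A h * A (h + 1)))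
              + mu * (A h * A (h + 1)) ^ 2
          rw [show h - 1 - 1 = h - 2 by ring, show h - 1 + 2 = h + 1 by ring,
            show h + 1 + 1 = h + 2 by ring, show h - 1 + 1 = h by ring,
            show h + 1 - 1 = h by ring, show h + 1 + 2 = h + 3 by ring]
          linear_combination hN h)
        (by
          intro h
          show A (h - 1) * A (h - 1 + 1) * (A (h + 1) * A (h + 1 + 1))
            = (A (h - 1) * A (h + 2)) * (A h * A (h + 1))
          rw [show h - 1 + 1 = h by ring, show h + 1 + 1 = h + 2 by ring]
          ring)
        (by
          intro h
          show A (h - ((n : ℤ) + 2)) * A (h + ((n : ℤ) + 2) + 1)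
              * (A (h - (n : ℤ)) * A (h + (n : ℤ) + 1))
            = A (h - 1 - ((n : ℤ) + 1)) * A (h - 1 + ((n : ℤ) + 1) + 1)
              * (A (h + 1 - ((n : ℤ) + 1)) * A (h + 1 + ((n : ℤ) + 1) + 1))
          rw [show h - 1 - ((n : ℤ) + 1) = h - ((n : ℤ) + 2) by ring,
            show h - 1 + ((n : ℤ) + 1) + 1 = h + (n : ℤ) + 1 by ring,
            show h + 1 - ((n : ℤ) + 1) = h - (n : ℤ) by ring,
            show h + 1 + ((n : ℤ) + 1) + 1 = h + ((n : ℤ) + 2) + 1 by ring]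
          ring)
        a' b' a b hp hq hphi
      obtain ⟨c, d, hrep, hphi'⟩ := hstep
      refine ⟨a, b, c, d, ?_, ?_, hphi'⟩
      · intro h
        rw [show ((n + 1 : ℕ) : ℤ) = (n : ℤ) + 1 by push_cast; ring]
        exact hq h
      · intro h
        rw [show ((n + 1 : ℕ) : ℤ) + 1 = (n : ℤ) + 2 by push_cast; ring]
        exact hrep h
  -- conclude
  intro m hm
  obtain ⟨n, rfl⟩ : ∃ n : ℕ, m = (n : ℤ) :=
    ⟨m.toNat, (Int.toNat_of_nonneg (by linarith)).symm⟩
  obtain ⟨a', b', a, b, hp, _, _⟩ := key n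
  exact ⟨a', b', hp⟩
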